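/- arXiv:2011.14033 — 3 statements merged into one kernel-verified Lean document; each statement's English description precedes it below -/
import Mathlib

section
/- Let f : ℝ → ℝ be twice differentiable with f'(t) > 0 and |f''(t)| ≤ f'(t) for all t ∈ ℝ. Then for all z₁ ≠ z₂ ∈ ℝ: (f(z₂) − f(z₁))/(z₂ − z₁) ≥ f'(z₁)·(1 − exp(−|z₁ − z₂|))/|z₁ − z₂| ≥ f'(z₁)·(1 + |z₁ − z₂|)^{-1}. -/
open Real intervalIntegral

lemma int_exp_neg (a b : ℝ) : ∫ t in a..b, Real.exp (-t) = Real.exp (-a) - Real.exp (-b) := by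
  have := intervalIntegral.integral_comp_neg (a := a) (b := b) (fun t : ℝ => Real.exp t)
  simpa [integral_exp] using this

lemma small_ineq {d : ℝ} (hd : 0 < d) : (1 + d)⁻¹ ≤ (1 - Real.exp (-d)) / d := by
  rw [inv_eq_one_div, div_le_div_iff₀ (by linarith) hd]
  have h1 : d + 1 ≤ Real.exp d := Real.add_one_le_exp d
  have h2 : Real.exp (-d) * Real.exp d = 1 := by
    rw [← Real.exp_add]; simp
  have h3 : (0:ℝ) < Real.exp d := Real.exp_pos d
  nlinarith [Real.exp_pos (-d)]

/-- integral mean bound from scalar self-concordance: if `f : ℝ → ℝ` is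
twice differentiable with `f' > 0` and `|f''| ≤ f'`, then for `z₁ ≠ z₂`,
`(f z₂ − f z₁)/(z₂ − z₁) ≥ f'(z₁)·(1 − exp(−|z₁−z₂|))/|z₁−z₂| ≥ f'(z₁)·(1+|z₁−z₂|)⁻¹`. -/
theorem integral_mean_self_concordance_bound (f : ℝ → ℝ)
    (hf : Differentiable ℝ f) (hf' : Differentiable ℝ (deriv f))
    (hpos : ∀ t : ℝ, 0 < deriv f t)
    (hsc : ∀ t : ℝ, |deriv (deriv f) t| ≤ deriv f t)
    (z₁ z₂ : ℝ) (hne : z₁ ≠ z₂) :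
    deriv f z₁ * (1 + |z₁ - z₂|)⁻¹
        ≤ deriv f z₁ * (1 - Real.exp (-|z₁ - z₂|)) / |z₁ - z₂| ∧
      deriv f z₁ * (1 - Real.exp (-|z₁ - z₂|)) / |z₁ - z₂|
        ≤ (f z₂ - f z₁) / (z₂ - z₁) := by
  set g := deriv f with hgdef
  have hd : 0 < |z₁ - z₂| := abs_pos.mpr (sub_ne_zero.mpr hne)
  -- pointwise lower bound on g
  have key : ∀ t : ℝ, g z₁ * Real.exp (-|t - z₁|) ≤ g t := by
    intro t
    have hlog : Differentiable ℝ (fun s => Real.log (g s)) := by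
      intro s
      exact ((Real.hasDerivAt_log (hpos s).ne').comp s (hf' s).hasDerivAt).differentiableAt
    have hderiv : ∀ s : ℝ, deriv (fun s => Real.log (g s)) s = (g s)⁻¹ * deriv g s := by
      intro s
      exact ((Real.hasDerivAt_log (hpos s).ne').comp s (hf' s).hasDerivAt).deriv
    have hlip : LipschitzWith 1 (fun s => Real.log (g s)) := by
      apply lipschitzWith_of_nnnorm_deriv_le hlog
      intro x
      rw [← NNReal.coe_le_coe, coe_nnnorm, hderiv x]
      simp only [NNReal.coe_one, Real.norm_eq_abs, abs_mul, abs_inv, abs_of_pos (hpos x)]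
      rw [inv_mul_le_iff₀ (hpos x), mul_one]
      exact hsc x
    have := hlip.dist_le_mul t z₁
    simp only [NNReal.coe_one, one_mul, Real.dist_eq] at this
    have h1 : Real.log (g z₁) - |t - z₁| ≤ Real.log (g t) := by
      have := abs_sub_abs_le_abs_sub (Real.log (g t)) (Real.log (g z₁))
      have h2 := (abs_le.mp (by simpa [Real.dist_eq] using hlip.dist_le_mul t z₁ : |Real.log (g t) - Real.log (g z₁)| ≤ dist t z₁)).1
      rw [Real.dist_eq] at h2
      linarith
    calc g z₁ * Real.exp (-|t - z₁|) = Real.exp (Real.log (g z₁) - |t - z₁|) := by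
          rw [Real.exp_sub, Real.exp_log (hpos z₁), Real.exp_neg]; ring
      _ ≤ Real.exp (Real.log (g t)) := Real.exp_le_exp.mpr h1
      _ = g t := Real.exp_log (hpos t)
  have hgc : Continuous g := hf'.continuous
  have hsecond : deriv f z₁ * (1 - Real.exp (-|z₁ - z₂|)) / |z₁ - z₂|
        ≤ (f z₂ - f z₁) / (z₂ - z₁) := by
    rcases lt_or_gt_of_ne hne with h | h
    · -- z₁ < z₂
      have habs : |z₁ - z₂| = z₂ - z₁ := by rw [abs_sub_comm]; exact abs_of_pos (by linarith)
      rw [habs]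
      have hftc : ∫ t in z₁..z₂, g t = f z₂ - f z₁ :=
        intervalIntegral.integral_deriv_eq_sub (fun x _ => hf x)
          (hgc.intervalIntegrable z₁ z₂)
      have hcomp : ∫ t in z₁..z₂, g z₁ * (Real.exp z₁ * Real.exp (-t)) ≤ ∫ t in z₁..z₂, g t := by
        apply intervalIntegral.integral_mono_on h.le
          (by apply Continuous.intervalIntegrable; continuity) (hgc.intervalIntegrable z₁ z₂)
        intro x hx
        have hxz : |x - z₁| = x - z₁ := abs_of_nonneg (by linarith [hx.1])
        have := key x
        rw [hxz] at this
        calc g z₁ * (Real.exp z₁ * Real.exp (-x)) = g z₁ * Real.exp (-(x - z₁)) := by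
              rw [← Real.exp_add]; ring_nf
          _ ≤ g x := this
      rw [intervalIntegral.integral_const_mul, intervalIntegral.integral_const_mul,
        int_exp_neg] at hcomp
      have hval : g z₁ * (Real.exp z₁ * (Real.exp (-z₁) - Real.exp (-z₂)))
          = g z₁ * (1 - Real.exp (-(z₂ - z₁))) := by
        rw [mul_sub, ← Real.exp_add, ← Real.exp_add]; ring_nf; simp [Real.exp_zero]
      rw [hval, hftc] at hcomp
      gcongr
    · -- z₂ < z₁
      have habs : |z₁ - z₂| = z₁ - z₂ := abs_of_pos (by linarith)
      rw [habs]
      have hrw : (f z₂ - f z₁) / (z₂ - z₁) = (f z₁ - f z₂) / (z₁ - z₂) := by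
        rw [← neg_div_neg_eq]; ring_nf
      rw [hrw]
      have hftc : ∫ t in z₂..z₁, g t = f z₁ - f z₂ :=
        intervalIntegral.integral_deriv_eq_sub (fun x _ => hf x)
          (hgc.intervalIntegrable z₂ z₁)
      have hcomp : ∫ t in z₂..z₁, g z₁ * (Real.exp (-z₁) * Real.exp t) ≤ ∫ t in z₂..z₁, g t := by
        apply intervalIntegral.integral_mono_on h.le
          (by apply Continuous.intervalIntegrable; continuity) (hgc.intervalIntegrable z₂ z₁)
        intro x hx
        have hxz : |x - z₁| = z₁ - x := by rw [abs_sub_comm]; exact abs_of_nonneg (by linarith [hx.2])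
        have := key x
        rw [hxz] at this
        calc g z₁ * (Real.exp (-z₁) * Real.exp x) = g z₁ * Real.exp (-(z₁ - x)) := by
              rw [← Real.exp_add]; ring_nf
          _ ≤ g x := this
      rw [intervalIntegral.integral_const_mul, intervalIntegral.integral_const_mul,
        integral_exp] at hcomp
      have hval : g z₁ * (Real.exp (-z₁) * (Real.exp z₁ - Real.exp z₂))
          = g z₁ * (1 - Real.exp (-(z₁ - z₂))) := by
        rw [mul_sub, ← Real.exp_add, ← Real.exp_add]; ring_nf; simp [Real.exp_zero]
      rw [hval, hftc] at hcomp
      gcongr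
  refine ⟨?_, hsecond⟩
  rw [mul_div_assoc]
  exact mul_le_mul_of_nonneg_left (small_ineq hd) (hpos z₁).le
end

section
/- (Generalized elliptical potential lemma.) Let {x_{t,i}} for t = 1,…,T and i ∈ Q_t (each Q_t a finite index set) be vectors in ℝ^d, let w_{t,i} > 0 be strictly positive weights, and let λ > 0. Define J_t = Σ_{s=1}^{t−1} Σ_{i∈Q_s} w_{s,i}·x_{s,i} x_{s,i}ᵀ + λ·I_d and x̃_{t,i} = √(w_{t,i})·x_{t,i}. Then: Σ_{t=1}^T min{ Σ_{i∈Q_t} ‖x̃_{t,i}‖²_{J_t^{-1}}, 1 } ≤ 2·log( det(J_{T+1}) / λ^d ). -/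
open Matrix

lemma aux_one_add_sum_le_prod {α : Type*} (s : Finset α) (f : α → ℝ)
    (hf : ∀ i ∈ s, 0 ≤ f i) : 1 + ∑ i ∈ s, f i ≤ ∏ i ∈ s, (1 + f i) := by
  classical
  induction s using Finset.induction_on with
  | empty => simp
  | @insert a s ha ih =>
    rw [Finset.sum_insert ha, Finset.prod_insert ha]
    have h0 := hf _ (Finset.mem_insert_self _ _)
    have ih' := ih fun i hi => hf i (Finset.mem_insert_of_mem hi)
    have hsum : 0 ≤ ∑ i ∈ s, f i :=
      Finset.sum_nonneg fun i hi => hf i (Finset.mem_insert_of_mem hi)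
    nlinarith [mul_le_mul_of_nonneg_left ih' (by linarith : (0:ℝ) ≤ 1 + f a)]

lemma aux_one_add_trace_le_det {d : ℕ} {M : Matrix (Fin d) (Fin d) ℝ}
    (hM : M.PosSemidef) : 1 + M.trace ≤ (1 + M).det := by
  have h := hM.1
  have spectral := h.spectral_theorem
  simp only [Unitary.conjStarAlgAut_apply] at spectral
  set V : Matrix (Fin d) (Fin d) ℝ := (Matrix.IsHermitian.eigenvectorUnitary h : Matrix (Fin d) (Fin d) ℝ) with hV
  set D : Matrix (Fin d) (Fin d) ℝ := Matrix.diagonal (RCLike.ofReal ∘ h.eigenvalues) with hD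
  have hVV : star V * V = 1 := Matrix.UnitaryGroup.star_mul_self _
  have hVV' : V * star V = 1 := by
    rw [mul_eq_one_comm]
    exact hVV
  have hDval : D = Matrix.diagonal h.eigenvalues := by
    simp [hD]
  have htr : M.trace = ∑ i, h.eigenvalues i := by
    conv_lhs => rw [spectral]
    rw [Matrix.trace_mul_comm, ← Matrix.mul_assoc, hVV, Matrix.one_mul, hDval,
      Matrix.trace_diagonal]
  have hone : (1 : Matrix (Fin d) (Fin d) ℝ) + M = V * (1 + D) * star V := by
    rw [Matrix.mul_add, Matrix.add_mul, Matrix.mul_one, hVV', ← spectral]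
  have hdet : (1 + M).det = ∏ i, (1 + h.eigenvalues i) := by
    rw [hone, Matrix.det_mul_right_comm, hVV', Matrix.one_mul, hDval, ← Matrix.diagonal_one,
      Matrix.diagonal_add, Matrix.det_diagonal]
  rw [htr, hdet]
  exact aux_one_add_sum_le_prod Finset.univ _ fun i _ => hM.eigenvalues_nonneg i

lemma aux_trace_mul_vecMulVec {d : ℕ} (P : Matrix (Fin d) (Fin d) ℝ) (v : Fin d → ℝ) :
    (P * Matrix.vecMulVec v v).trace = v ⬝ᵥ P *ᵥ v := by
  simp only [Matrix.trace, Matrix.diag, Matrix.mul_apply, Matrix.vecMulVec_apply,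
    dotProduct, Matrix.mulVec, Finset.mul_sum]
  exact Finset.sum_congr rfl fun j _ => Finset.sum_congr rfl fun k _ => by ring

lemma aux_psd_smul_vecMulVec {d : ℕ} {c : ℝ} (hc : 0 ≤ c) (v : Fin d → ℝ) :
    (c • Matrix.vecMulVec v v).PosSemidef := by
  rw [Matrix.posSemidef_iff_dotProduct_mulVec]
  constructor
  · ext i j
    simp only [Matrix.conjTranspose_apply, Matrix.smul_apply, Matrix.vecMulVec_apply,
      star_trivial, smul_eq_mul]
    ring
  · intro y
    have hmv : (c • Matrix.vecMulVec v v) *ᵥ y = (c * (v ⬝ᵥ y)) • v := by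
      ext i
      simp [Matrix.mulVec, dotProduct, Matrix.vecMulVec_apply, Finset.mul_sum, Pi.smul_apply,
        mul_assoc, mul_comm, mul_left_comm]
    rw [hmv]
    simp only [star_trivial, dotProduct_smul, smul_eq_mul]
    have : y ⬝ᵥ v = v ⬝ᵥ y := dotProduct_comm y v
    rw [this]
    nlinarith [mul_self_nonneg (v ⬝ᵥ y)]

set_option maxHeartbeats 1000000 in
/-- generalized elliptical potential lemma: with
`J_t = Σ_{s<t} Σ_{i∈Q_s} w_{s,i}·x_{s,i}x_{s,i}ᵀ + λI` (weights `w_{s,i} > 0`, `λ > 0`)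
and `x̃_{t,i} = √(w_{t,i})·x_{t,i}`,
`Σ_{t<T} min(Σ_{i∈Q_t} ‖x̃_{t,i}‖²_{J_t⁻¹}, 1) ≤ 2·log(det(J_T)/λ^d)` (the matrix after
all `T` rounds is `J_T` in this 0-indexed convention, i.e. `J_{T+1}` in the paper's). -/
theorem generalized_elliptical_potential {d : ℕ} {ι : Type*}
    (T : ℕ) (Q : ℕ → Finset ι) (x : ℕ → ι → Fin d → ℝ)
    (w : ℕ → ι → ℝ) (hw : ∀ t i, 0 < w t i)
    (lam : ℝ) (hlam : 0 < lam)
    (J : ℕ → Matrix (Fin d) (Fin d) ℝ)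
    (hJ : ∀ t, J t = (∑ s ∈ Finset.range t, ∑ i ∈ Q s,
        w s i • Matrix.vecMulVec (x s i) (x s i)) + lam • (1 : Matrix (Fin d) (Fin d) ℝ)) :
    ∑ t ∈ Finset.range T,
        min (∑ i ∈ Q t,
          (Real.sqrt (w t i) • x t i) ⬝ᵥ (J t)⁻¹.mulVec (Real.sqrt (w t i) • x t i)) 1
      ≤ 2 * Real.log ((J T).det / lam ^ d) := by
  set A : ℕ → Matrix (Fin d) (Fin d) ℝ :=
    fun t => ∑ i ∈ Q t, w t i • Matrix.vecMulVec (x t i) (x t i) with hA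
  have hApsd : ∀ t, (A t).PosSemidef := by
    intro t
    apply Finset.sum_induction _ _ (fun a b ha hb => ha.add hb) Matrix.PosSemidef.zero
    intro i _
    exact aux_psd_smul_vecMulVec (hw t i).le _
  have hJpd : ∀ t, (J t).PosDef := by
    intro t
    rw [hJ t]
    have hsum : (∑ s ∈ Finset.range t, A s).PosSemidef :=
      Finset.sum_induction _ _ (fun a b ha hb => ha.add hb) Matrix.PosSemidef.zero
        fun s _ => hApsd s
    have hlid : (lam • (1 : Matrix (Fin d) (Fin d) ℝ)).PosDef := by
      have : lam • (1 : Matrix (Fin d) (Fin d) ℝ) = Matrix.diagonal (fun _ => lam) := by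
        rw [Matrix.smul_one_eq_diagonal]
      rw [this]
      exact Matrix.PosDef.diagonal fun i => hlam
    exact Matrix.PosDef.posSemidef_add hsum hlid
  -- u t : the quadratic sum
  set u : ℕ → ℝ := fun t => ∑ i ∈ Q t,
      (Real.sqrt (w t i) • x t i) ⬝ᵥ (J t)⁻¹.mulVec (Real.sqrt (w t i) • x t i) with hu
  have hu_nonneg : ∀ t, 0 ≤ u t := by
    intro t
    apply Finset.sum_nonneg
    intro i _
    have := ((hJpd t).inv).posSemidef.dotProduct_mulVec_nonneg (Real.sqrt (w t i) • x t i)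
    simpa using this
  have hu_trace : ∀ t, u t = ((J t)⁻¹ * A t).trace := by
    intro t
    rw [hA, Matrix.mul_sum, Matrix.trace_sum]
    apply Finset.sum_congr rfl
    intro i _
    rw [Matrix.mul_smul, Matrix.trace_smul, aux_trace_mul_vecMulVec]
    rw [smul_dotProduct, Matrix.mulVec_smul, dotProduct_smul]
    simp only [smul_eq_mul]
    rw [← mul_assoc, Real.mul_self_sqrt (hw t i).le]
  -- key step inequality
  have key : ∀ t, (J t).det * (1 + u t) ≤ (J (t + 1)).det := by
    intro t
    have hP := hJpd t
    set S : Matrix (Fin d) (Fin d) ℝ := (open scoped MatrixOrder in CFC.sqrt (J t)) with hS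
    have hSS : S * S = J t := (open scoped MatrixOrder in CFC.sqrt_mul_sqrt_self (J t) hP.posSemidef.nonneg)
    have hSsym : S.IsHermitian := (open scoped MatrixOrder in (CFC.sqrt_nonneg (J t)).posSemidef.1)
    have hdetS : S.det ≠ 0 := by
      intro h0
      have : (J t).det = 0 := by rw [← hSS, Matrix.det_mul, h0, mul_zero]
      exact (hP.det_pos.ne') this
    have h1 : S * S⁻¹ = 1 := Matrix.mul_nonsing_inv S (isUnit_iff_ne_zero.mpr hdetS)
    have h2 : S⁻¹ * S = 1 := Matrix.nonsing_inv_mul S (isUnit_iff_ne_zero.mpr hdetS)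
    have hSinvsym : (S⁻¹)ᴴ = S⁻¹ := by
      rw [Matrix.conjTranspose_nonsing_inv, hSsym.eq]
    set M : Matrix (Fin d) (Fin d) ℝ := S⁻¹ * A t * S⁻¹ with hM
    have hMpsd : M.PosSemidef := by
      have := (hApsd t).conjTranspose_mul_mul_same (B := S⁻¹)
      rwa [hSinvsym] at this
    have hJsucc : J (t + 1) = J t + A t := by
      rw [hJ (t + 1), hJ t, Finset.sum_range_succ]
      abel
    have e1 : S * (S⁻¹ * A t * S⁻¹) * S = A t := by
      calc S * (S⁻¹ * A t * S⁻¹) * S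
          = (S * S⁻¹) * A t * (S⁻¹ * S) := by
            simp only [Matrix.mul_assoc]
        _ = A t := by rw [h1, h2, Matrix.one_mul, Matrix.mul_one]
    have hfact : S * (1 + M) * S = J (t + 1) := by
      rw [hJsucc, hM, Matrix.mul_add, Matrix.mul_one, Matrix.add_mul, hSS, e1]
    have hdet : (J (t + 1)).det = (J t).det * (1 + M).det := by
      rw [← hfact, Matrix.det_mul, Matrix.det_mul, ← hSS, Matrix.det_mul]
      ring
    have hSinv2 : S⁻¹ * S⁻¹ = (J t)⁻¹ := by
      rw [← hSS, Matrix.mul_inv_rev]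
    have htr : M.trace = u t := by
      rw [hu_trace t, hM, Matrix.trace_mul_comm, ← Matrix.mul_assoc, hSinv2]
    have hge : 1 + u t ≤ (1 + M).det := by
      rw [← htr]
      exact aux_one_add_trace_le_det hMpsd
    rw [hdet]
    exact mul_le_mul_of_nonneg_left hge hP.det_pos.le
  -- per-step log bound
  have step : ∀ t, min (u t) 1 ≤
      2 * (Real.log ((J (t + 1)).det) - Real.log ((J t).det)) := by
    intro t
    have h0 := hu_nonneg t
    have h1u : (0:ℝ) < 1 + u t := by linarith
    have hlog1 : 1 - (1 + u t)⁻¹ ≤ Real.log (1 + u t) :=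
      Real.one_sub_inv_le_log_of_pos h1u
    have hmin : min (u t) 1 ≤ 2 * (1 - (1 + u t)⁻¹) := by
      have hinv : (1 + u t)⁻¹ = 1 / (1 + u t) := by ring
      rcases le_total (u t) 1 with h | h
      · rw [min_eq_left h, hinv]
        rw [show (2:ℝ) * (1 - 1 / (1 + u t)) = 2 * u t / (1 + u t) by field_simp; ring]
        rw [le_div_iff₀ h1u]
        nlinarith
      · rw [min_eq_right h, hinv]
        rw [show (2:ℝ) * (1 - 1 / (1 + u t)) = 2 * u t / (1 + u t) by field_simp; ring]
        rw [le_div_iff₀ h1u]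
        nlinarith
    have hloggrow : Real.log ((J t).det) + Real.log (1 + u t) ≤ Real.log ((J (t+1)).det) := by
      have := key t
      calc Real.log ((J t).det) + Real.log (1 + u t)
          = Real.log ((J t).det * (1 + u t)) :=
            (Real.log_mul (hJpd t).det_pos.ne' h1u.ne').symm
        _ ≤ Real.log ((J (t+1)).det) :=
            Real.log_le_log (mul_pos (hJpd t).det_pos h1u) (key t)
    have := hlog1
    linarith [hmin, hlog1, hloggrow]
  -- telescope
  calc ∑ t ∈ Finset.range T, min (u t) 1
      ≤ ∑ t ∈ Finset.range T,
          2 * (Real.log ((J (t + 1)).det) - Real.log ((J t).det)) :=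
        Finset.sum_le_sum fun t _ => step t
    _ = 2 * (Real.log ((J T).det) - Real.log ((J 0).det)) := by
        rw [← Finset.mul_sum, Finset.sum_range_sub (fun t => Real.log ((J t).det))]
    _ = 2 * Real.log ((J T).det / lam ^ d) := by
        have hJ0 : (J 0).det = lam ^ d := by
          rw [hJ 0]
          simp [Matrix.det_smul]
        rw [hJ0, Real.log_div (hJpd T).det_pos.ne' (by positivity)]
end

section
/- Let {x_{t,i}} for t = 1,…,T and i ∈ Q_t with |Q_t| ≤ K satisfy ‖x_{t,i}‖₂ ≤ 1, and let λ > 0. Define V_t = Σ_{s=1}^{t−1} Σ_{i∈Q_s} x_{s,i} x_{s,i}ᵀ + λ·I_d. Then: Σ_{t=1}^T min{ Σ_{i∈Q_t} ‖x_{t,i}‖²_{V_t^{-1}}, 1 } ≤ 2d·log(1 + K·T/(d·λ)). -/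
open Matrix

private lemma prod_one_add_ge {n : Type*} [Fintype n] (f : n → ℝ) (hf : ∀ i, 0 ≤ f i) :
    1 + ∑ i, f i ≤ ∏ i, (1 + f i) := by
  classical
  have : ∀ s : Finset n, 1 + ∑ i ∈ s, f i ≤ ∏ i ∈ s, (1 + f i) := by
    intro s
    induction s using Finset.induction with
    | empty => simp
    | @insert a s h ih =>
      rw [Finset.sum_insert h, Finset.prod_insert h]
      have hs : 0 ≤ ∑ i ∈ s, f i := Finset.sum_nonneg fun i _ => hf i
      nlinarith [hf a]
  exact this Finset.univ

private lemma trace_eq_sum_eigs {d : ℕ} {A : Matrix (Fin d) (Fin d) ℝ} (hA : A.IsHermitian) :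
    A.trace = ∑ i, hA.eigenvalues i := by
  conv_lhs => rw [hA.spectral_theorem]
  rw [Unitary.conjStarAlgAut_apply, Matrix.trace_mul_cycle, (Matrix.mem_unitaryGroup_iff').mp (hA.eigenvectorUnitary).2,
    one_mul]
  simp [RCLike.ofReal_real_eq_id, Matrix.trace_diagonal]

private lemma det_one_add_psd {d : ℕ} {N : Matrix (Fin d) (Fin d) ℝ} (hN : N.PosSemidef) :
    1 + N.trace ≤ (1 + N).det := by
  have hH := hN.isHermitian
  set U : Matrix (Fin d) (Fin d) ℝ := (hH.eigenvectorUnitary : Matrix (Fin d) (Fin d) ℝ) with hUdef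
  have hU : U * star U = 1 := (Matrix.mem_unitaryGroup_iff).mp (hH.eigenvectorUnitary).2
  have h1 : 1 + N = U * (1 + Matrix.diagonal (RCLike.ofReal ∘ hH.eigenvalues)) * star U := by
    rw [Matrix.mul_add, Matrix.add_mul, Matrix.mul_one, hU]
    congr 1
    exact hH.spectral_theorem
  have hdet : (1 + N).det = ∏ i, (1 + hH.eigenvalues i) := by
    rw [h1, Matrix.det_mul, Matrix.det_mul, mul_comm (U.det), mul_assoc, ← Matrix.det_mul, hU,
      Matrix.det_one, mul_one]
    have : (1 : Matrix (Fin d) (Fin d) ℝ) + Matrix.diagonal (RCLike.ofReal ∘ hH.eigenvalues)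
        = Matrix.diagonal (fun i => 1 + hH.eigenvalues i) := by
      rw [← Matrix.diagonal_one, Matrix.diagonal_add]
      simp [RCLike.ofReal_real_eq_id]
    rw [this, Matrix.det_diagonal]
  rw [hdet, trace_eq_sum_eigs hH]
  exact prod_one_add_ge _ hN.eigenvalues_nonneg

private lemma vmv_psd {d : ℕ} (x : Fin d → ℝ) : (Matrix.vecMulVec x x).PosSemidef := by
  refine Matrix.PosSemidef.of_dotProduct_mulVec_nonneg ?_ ?_
  · ext i j
    simp [Matrix.conjTranspose_apply, Matrix.vecMulVec_apply, mul_comm]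
  · intro y
    have h : Matrix.vecMulVec x x *ᵥ y = (x ⬝ᵥ y) • x := by
      ext i
      simp [Matrix.mulVec, Matrix.vecMulVec_apply, dotProduct, Finset.mul_sum, mul_assoc,
        mul_comm, mul_left_comm]
    rw [h]
    simp only [star_trivial, dotProduct_smul, smul_eq_mul]
    rw [dotProduct_comm y x]
    exact mul_self_nonneg _

private lemma trace_mul_vmv {d : ℕ} (A : Matrix (Fin d) (Fin d) ℝ) (x : Fin d → ℝ) :
    (A * Matrix.vecMulVec x x).trace = x ⬝ᵥ A *ᵥ x := by
  simp only [Matrix.trace, Matrix.diag_apply, Matrix.mul_apply, Matrix.vecMulVec_apply,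
    dotProduct, Matrix.mulVec, Finset.mul_sum]
  apply Finset.sum_congr rfl
  intro i _
  apply Finset.sum_congr rfl
  intro j _
  ring

open scoped MatrixOrder in
private lemma det_add_psd {d : ℕ} {V M : Matrix (Fin d) (Fin d) ℝ}
    (hV : V.PosDef) (hM : M.PosSemidef) :
    V.det * (1 + (V⁻¹ * M).trace) ≤ (V + M).det := by
  set S := CFC.sqrt V with hSdef
  have hSpsd : S.PosSemidef := (CFC.sqrt_nonneg V).posSemidef
  have hSS : S * S = V := CFC.sqrt_mul_sqrt_self V hV.posSemidef.nonneg
  have hdetS : S.det * S.det = V.det := by rw [← Matrix.det_mul, hSS]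
  have hdS : S.det ≠ 0 := by
    intro h
    have := hV.det_pos
    rw [← hdetS, h, mul_zero] at this
    exact lt_irrefl _ this
  have hS1 : S * S⁻¹ = 1 := Matrix.mul_nonsing_inv S hdS.isUnit
  have hS1' : S⁻¹ * S = 1 := Matrix.nonsing_inv_mul S hdS.isUnit
  have hVinv : S⁻¹ * S⁻¹ = V⁻¹ := by rw [← Matrix.mul_inv_rev, hSS]
  have hinvH : (S⁻¹).IsHermitian := hSpsd.isHermitian.inv
  set N := S⁻¹ * M * S⁻¹ with hNdef
  have hNpsd : N.PosSemidef := by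
    have := hM.conjTranspose_mul_mul_same (S⁻¹)
    rwa [hinvH.eq] at this
  have hfact : V + M = S * (1 + N) * S := by
    rw [Matrix.mul_add, Matrix.add_mul, Matrix.mul_one, hSS, hNdef]
    congr 1
    rw [← Matrix.mul_assoc, ← Matrix.mul_assoc, hS1, Matrix.one_mul, Matrix.mul_assoc, hS1',
      Matrix.mul_one]
  have htr : N.trace = (V⁻¹ * M).trace := by
    rw [hNdef, Matrix.trace_mul_cycle, hVinv]
  calc V.det * (1 + (V⁻¹ * M).trace) = S.det * S.det * (1 + N.trace) := by rw [hdetS, htr]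
    _ ≤ S.det * S.det * (1 + N).det := by
        have h1 : 1 + N.trace ≤ (1 + N).det := det_one_add_psd hNpsd
        have h2 : 0 < S.det * S.det := by rw [hdetS]; exact hV.det_pos
        exact mul_le_mul_of_nonneg_left h1 h2.le
    _ = (V + M).det := by rw [hfact, Matrix.det_mul, Matrix.det_mul]; ring

private lemma min_le_two_log {a : ℝ} (ha : 0 ≤ a) : min a 1 ≤ 2 * Real.log (1 + a) := by
  rcases le_or_gt a 1 with hle | hlt
  · rw [min_eq_left hle]
    have hp : (0:ℝ) < 1 + a := by linarith
    have h := Real.log_le_sub_one_of_pos (inv_pos.mpr hp)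
    rw [Real.log_inv] at h
    have hinv : (1 + a)⁻¹ * (1 + a) = 1 := inv_mul_cancel₀ hp.ne'
    have hinvpos : 0 < (1 + a)⁻¹ := inv_pos.mpr hp
    nlinarith [mul_nonneg ha (sub_nonneg.mpr hle)]
  · rw [min_eq_right hlt.le]
    have h2 : Real.log 2 ≤ Real.log (1 + a) := Real.log_le_log (by norm_num) (by linarith)
    have := Real.log_two_gt_d9
    linarith

private lemma logdet_le {d : ℕ} (hd : 0 < d) {V : Matrix (Fin d) (Fin d) ℝ} (hV : V.PosDef) :
    Real.log V.det ≤ d * Real.log (V.trace / d) := by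
  have hH := hV.isHermitian
  set ev := hH.eigenvalues with hev
  have hpos : ∀ i, 0 < ev i := hV.eigenvalues_pos
  have htr : V.trace = ∑ i, ev i := trace_eq_sum_eigs hH
  have hdR : (0:ℝ) < d := Nat.cast_pos.mpr hd
  have htrpos : 0 < V.trace := by
    rw [htr]
    have : (Finset.univ : Finset (Fin d)).Nonempty := by
      simpa [Finset.univ_nonempty_iff] using Fin.pos_iff_nonempty.mp hd
    exact Finset.sum_pos (fun i _ => hpos i) this
  set c := V.trace / d with hc
  have hcpos : 0 < c := div_pos htrpos hdR
  have hdet : Real.log V.det = ∑ i, Real.log (ev i) := by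
    rw [hH.det_eq_prod_eigenvalues]
    simp only [RCLike.ofReal_real_eq_id, id_eq]
    rw [Real.log_prod (fun i _ => (hpos i).ne')]
  have hstep : ∀ i : Fin d, Real.log (ev i) ≤ Real.log c + (ev i / c - 1) := by
    intro i
    have h := Real.log_le_sub_one_of_pos (div_pos (hpos i) hcpos)
    rw [Real.log_div (hpos i).ne' hcpos.ne'] at h
    linarith
  have hsum : ∑ i, Real.log (ev i) ≤ ∑ i : Fin d, (Real.log c + (ev i / c - 1)) :=
    Finset.sum_le_sum fun i _ => hstep i
  have heval : ∑ i : Fin d, (Real.log c + (ev i / c - 1))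
      = d * Real.log c + (∑ i, ev i) / c - d := by
    rw [Finset.sum_add_distrib, Finset.sum_sub_distrib, ← Finset.sum_div]
    simp [Finset.card_univ]
    ring
  have hfin : (∑ i, ev i) / c = d := by
    rw [← htr, hc]
    field_simp
  rw [hdet]
  calc ∑ i, Real.log (ev i) ≤ d * Real.log c + (∑ i, ev i) / c - d := heval ▸ hsum
    _ = d * Real.log c := by rw [hfin]; ring

/-- unweighted elliptical potential bound. With contexts of ℓ₂-norm at
most 1, assortments of size at most `K`, and `V_t = Σ_{s<t} Σ_{i∈Q_s} x_{s,i}x_{s,i}ᵀ + λI`,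
`Σ_{t<T} min(Σ_{i∈Q_t} ‖x_{t,i}‖²_{V_t⁻¹}, 1) ≤ 2d·log(1 + KT/(dλ))`. -/
theorem elliptical_potential_V_bound {d : ℕ} (hd : 0 < d) {ι : Type*}
    (T K : ℕ) (Q : ℕ → Finset ι) (hQ : ∀ t, (Q t).card ≤ K)
    (x : ℕ → ι → Fin d → ℝ)
    (hx : ∀ t i, Real.sqrt (x t i ⬝ᵥ x t i) ≤ 1)
    (lam : ℝ) (hlam : 0 < lam)
    (V : ℕ → Matrix (Fin d) (Fin d) ℝ)
    (hV : ∀ t, V t = (∑ s ∈ Finset.range t, ∑ i ∈ Q s,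
        Matrix.vecMulVec (x s i) (x s i)) + lam • (1 : Matrix (Fin d) (Fin d) ℝ)) :
    ∑ t ∈ Finset.range T,
        min (∑ i ∈ Q t, x t i ⬝ᵥ (V t)⁻¹.mulVec (x t i)) 1
      ≤ 2 * d * Real.log (1 + K * T / (d * lam)) := by
  classical
  have hdR : (0:ℝ) < d := Nat.cast_pos.mpr hd
  -- positive definiteness of the λ•1 part
  have hlam1 : (lam • (1 : Matrix (Fin d) (Fin d) ℝ)).PosDef := by
    have h1 : lam • (1 : Matrix (Fin d) (Fin d) ℝ)
        = Matrix.diagonal (fun _ : Fin d => lam) := by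
      ext i j
      by_cases h : i = j <;> simp [Matrix.diagonal_apply, Matrix.one_apply, h]
    rw [h1]
    exact Matrix.posDef_diagonal_iff.mpr fun _ => hlam
  set M : ℕ → Matrix (Fin d) (Fin d) ℝ :=
    fun t => ∑ i ∈ Q t, Matrix.vecMulVec (x t i) (x t i) with hM
  have hMpsd : ∀ t, (M t).PosSemidef := fun t =>
    Finset.sum_induction _ _ (fun a b ha hb => ha.add hb) Matrix.PosSemidef.zero
      (fun i _ => vmv_psd _)
  have hVpd : ∀ t, (V t).PosDef := by
    intro t
    rw [hV t]
    have hsum : (∑ s ∈ Finset.range t, ∑ i ∈ Q s,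
        Matrix.vecMulVec (x s i) (x s i)).PosSemidef :=
      Finset.sum_induction _ _ (fun a b ha hb => ha.add hb) Matrix.PosSemidef.zero
        (fun s _ => hMpsd s)
    exact Matrix.PosDef.posSemidef_add hsum hlam1
  set S : ℕ → ℝ := fun t => ∑ i ∈ Q t, x t i ⬝ᵥ (V t)⁻¹.mulVec (x t i) with hS
  have hSnn : ∀ t, 0 ≤ S t := by
    intro t
    apply Finset.sum_nonneg
    intro i _
    have h := ((hVpd t).inv).posSemidef.dotProduct_mulVec_nonneg (x t i)
    simpa using h
  have hstep : ∀ t, V (t + 1) = V t + M t := by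
    intro t
    rw [hV (t + 1), hV t, Finset.sum_range_succ, add_right_comm]
  have htrS : ∀ t, ((V t)⁻¹ * M t).trace = S t := by
    intro t
    rw [hM, Finset.mul_sum, Matrix.trace_sum]
    exact Finset.sum_congr rfl fun i _ => trace_mul_vmv _ _
  set f : ℕ → ℝ := fun t => Real.log (V t).det with hf
  have hkey : ∀ t, min (S t) 1 ≤ 2 * (f (t + 1) - f t) := by
    intro t
    have hdet : (V t).det * (1 + S t) ≤ (V (t + 1)).det := by
      rw [hstep t, ← htrS t]
      exact det_add_psd (hVpd t) (hMpsd t)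
    have h1S : (0:ℝ) < 1 + S t := by have := hSnn t; linarith
    have hlog : Real.log (1 + S t) ≤ f (t + 1) - f t := by
      have h := Real.log_le_log (mul_pos (hVpd t).det_pos h1S) hdet
      rw [Real.log_mul (hVpd t).det_pos.ne' h1S.ne'] at h
      simp only [hf]
      linarith
    calc min (S t) 1 ≤ 2 * Real.log (1 + S t) := min_le_two_log (hSnn t)
      _ ≤ 2 * (f (t + 1) - f t) := by linarith
  have hsum1 : ∑ t ∈ Finset.range T, min (S t) 1 ≤ 2 * (f T - f 0) := by
    calc ∑ t ∈ Finset.range T, min (S t) 1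
        ≤ ∑ t ∈ Finset.range T, 2 * (f (t + 1) - f t) :=
          Finset.sum_le_sum fun t _ => hkey t
      _ = 2 * (f T - f 0) := by rw [← Finset.mul_sum, Finset.sum_range_sub]
  -- evaluate f 0
  have hV0 : f 0 = d * Real.log lam := by
    have h0 : V 0 = lam • (1 : Matrix (Fin d) (Fin d) ℝ) := by
      rw [hV 0]; simp
    simp only [hf, h0, Matrix.det_smul, Matrix.det_one, mul_one, Fintype.card_fin]
    rw [Real.log_pow]
  -- bound trace of V T
  have hxx : ∀ t i, x t i ⬝ᵥ x t i ≤ 1 := by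
    intro t i
    have h1 := hx t i
    have h2 : 0 ≤ x t i ⬝ᵥ x t i := Finset.sum_nonneg fun j _ => mul_self_nonneg _
    nlinarith [Real.sq_sqrt h2, Real.sqrt_nonneg (x t i ⬝ᵥ x t i)]
  have htrace : (V T).trace ≤ K * T + lam * d := by
    rw [hV T]
    rw [Matrix.trace_add, Matrix.trace_smul, Matrix.trace_one]
    have h1 : (∑ s ∈ Finset.range T, ∑ i ∈ Q s,
        Matrix.vecMulVec (x s i) (x s i)).trace ≤ (K : ℝ) * T := by
      rw [Matrix.trace_sum]
      have hbound : ∀ s, (∑ i ∈ Q s, Matrix.vecMulVec (x s i) (x s i)).trace ≤ (K : ℝ) := by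
        intro s
        rw [Matrix.trace_sum]
        have heach : ∀ i ∈ Q s, (Matrix.vecMulVec (x s i) (x s i)).trace ≤ 1 := by
          intro i _
          have : (Matrix.vecMulVec (x s i) (x s i)).trace = x s i ⬝ᵥ x s i := by
            simp [Matrix.trace, Matrix.vecMulVec_apply, dotProduct]
          rw [this]
          exact hxx s i
        calc ∑ i ∈ Q s, (Matrix.vecMulVec (x s i) (x s i)).trace
            ≤ ∑ _i ∈ Q s, (1:ℝ) := Finset.sum_le_sum heach
          _ = (Q s).card := by simp
          _ ≤ (K : ℝ) := Nat.cast_le.mpr (hQ s)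
      calc ∑ s ∈ Finset.range T, (∑ i ∈ Q s, Matrix.vecMulVec (x s i) (x s i)).trace
          ≤ ∑ _s ∈ Finset.range T, (K : ℝ) := Finset.sum_le_sum fun s _ => hbound s
        _ = (K : ℝ) * T := by simp [mul_comm]
    simp only [Fintype.card_fin, smul_eq_mul]
    linarith
  -- bound f T
  have hc2pos : (0:ℝ) < lam + K * T / d := by positivity
  have hfT : f T ≤ d * Real.log (lam + K * T / d) := by
    have h1 := logdet_le hd (hVpd T)
    have h2 : (V T).trace / d ≤ lam + K * T / d := by
      rw [div_le_iff₀ hdR, add_mul, div_mul_cancel₀ _ hdR.ne']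
      calc (V T).trace ≤ K * T + lam * d := htrace
        _ = lam * d + K * T := by ring
    have h3 : 0 < (V T).trace / d := by
      have := (hVpd T).det_pos
      -- trace positivity: trace = λd + nonneg part ≥ λd > 0
      have h4 : lam * d ≤ (V T).trace + 0 := by
        rw [hV T, Matrix.trace_add, Matrix.trace_smul, Matrix.trace_one]
        have : 0 ≤ (∑ s ∈ Finset.range T, ∑ i ∈ Q s,
            Matrix.vecMulVec (x s i) (x s i)).trace := by
          rw [Matrix.trace_sum]
          apply Finset.sum_nonneg
          intro s _
          rw [Matrix.trace_sum]
          apply Finset.sum_nonneg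
          intro i _
          simp only [Matrix.trace, Matrix.diag_apply, Matrix.vecMulVec_apply]
          exact Finset.sum_nonneg fun j _ => mul_self_nonneg _
        simp only [Fintype.card_fin, smul_eq_mul]
        linarith
      have h5 : 0 < (V T).trace := by nlinarith [mul_pos hlam hdR]
      positivity
    calc f T ≤ d * Real.log ((V T).trace / d) := h1
      _ ≤ d * Real.log (lam + K * T / d) :=
        mul_le_mul_of_nonneg_left (Real.log_le_log h3 h2) hdR.le
  -- final arithmetic
  have hfinal : 2 * (f T - f 0) ≤ 2 * d * Real.log (1 + K * T / (d * lam)) := by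
    have heq : Real.log (lam + K * T / d) - Real.log lam
        = Real.log (1 + K * T / (d * lam)) := by
      rw [← Real.log_div hc2pos.ne' hlam.ne']
      congr 1
      field_simp
    rw [hV0]
    have : f T - d * Real.log lam ≤ d * Real.log (1 + K * T / (d * lam)) := by
      rw [← heq]
      calc f T - d * Real.log lam ≤ d * Real.log (lam + K * T / d) - d * Real.log lam := by
            linarith
        _ = d * (Real.log (lam + K * T / d) - Real.log lam) := by ring
    linarith
  exact le_trans hsum1 hfinal
end
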